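/- For every real number w with w > 1/4, Σ_{n=0}^∞ 1 / (w^{n+1} · C(2n, n) · (2n+1)) = ∫_0^1 1/(w - x(1-x)) dx = 4 · arctan(1/√(4w - 1)) / √(4w - 1), where the series converges absolutely. -/

import Mathlib

open Real intervalIntegral

lemma aux_deriv (k m : ℕ) (x : ℝ) :
    HasDerivAt (fun x : ℝ => x ^ (k+1) * (1-x) ^ (m+1))
      ((k+1 : ℝ) * x ^ k * (1-x) ^ (m+1) - (m+1 : ℝ) * x ^ (k+1) * (1-x) ^ m) x := by
  have h1 : HasDerivAt (fun x : ℝ => x ^ (k+1)) ((k+1 : ℝ) * x ^ k) x := by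
    simpa using hasDerivAt_pow (k+1) x
  have h2 : HasDerivAt (fun x : ℝ => (1-x) ^ (m+1)) (-((m+1 : ℝ) * (1-x) ^ m)) x := by
    have := (hasDerivAt_pow (m+1) (1-x)).comp x ((hasDerivAt_const x (1:ℝ)).sub (hasDerivAt_id x))
    simp at this; exact this
  have := h1.mul h2
  refine this.congr_deriv ?_
  ring

lemma aux_beta : ∀ (m k : ℕ),
    ∫ x in (0:ℝ)..1, x ^ k * (1-x) ^ m
      = (k.factorial : ℝ) * m.factorial / (k+m+1).factorial := by
  intro m
  induction m with
  | zero =>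
    intro k
    simp only [pow_zero, mul_one, integral_pow]
    rw [add_zero, Nat.factorial_succ, one_pow, zero_pow (by omega)]
    have h0 : (k:ℝ) + 1 ≠ 0 := by positivity
    have h1 : (k.factorial : ℝ) ≠ 0 := by positivity
    push_cast
    field_simp
    simp
  | succ m ih =>
    intro k
    have hInt1 : IntervalIntegrable (fun x : ℝ => (k+1 : ℝ) * x ^ k * (1-x) ^ (m+1)) MeasureTheory.volume 0 1 := by
      apply Continuous.intervalIntegrable; fun_prop
    have hInt2 : IntervalIntegrable (fun x : ℝ => (m+1 : ℝ) * x ^ (k+1) * (1-x) ^ m) MeasureTheory.volume 0 1 := by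
      apply Continuous.intervalIntegrable; fun_prop
    have key : ∫ x in (0:ℝ)..1, ((k+1 : ℝ) * x ^ k * (1-x) ^ (m+1) - (m+1 : ℝ) * x ^ (k+1) * (1-x) ^ m) = 0 := by
      rw [integral_eq_sub_of_hasDerivAt (fun x _ => aux_deriv k m x) (hInt1.sub hInt2)]
      simp
    rw [integral_sub hInt1 hInt2] at key
    have e1 : ∫ x in (0:ℝ)..1, (k+1 : ℝ) * x ^ k * (1-x) ^ (m+1)
        = (k+1 : ℝ) * ∫ x in (0:ℝ)..1, x ^ k * (1-x) ^ (m+1) := by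
      rw [← integral_const_mul]; simp_rw [mul_assoc]
    have e2 : ∫ x in (0:ℝ)..1, (m+1 : ℝ) * x ^ (k+1) * (1-x) ^ m
        = (m+1 : ℝ) * ∫ x in (0:ℝ)..1, x ^ (k+1) * (1-x) ^ m := by
      rw [← integral_const_mul]; simp_rw [mul_assoc]
    rw [e1, e2, ih (k+1), sub_eq_zero] at key
    have hk : (k+1 : ℝ) ≠ 0 := by positivity
    have hA : ∫ x in (0:ℝ)..1, x ^ k * (1-x) ^ (m+1)
        = (m+1 : ℝ) * ((k+1).factorial * m.factorial / (k+1+m+1).factorial) / (k+1) := by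
      field_simp at key ⊢
      linarith [key]
    rw [hA]
    have h1 : ((k+1).factorial : ℝ) = (k+1) * k.factorial := by
      rw [Nat.factorial_succ]; push_cast; ring
    have h2 : ((m+1).factorial : ℝ) = (m+1) * m.factorial := by
      rw [Nat.factorial_succ]; push_cast; ring
    have h3 : (k+1+m+1) = (k+(m+1)+1) := by ring
    rw [h1, h3, h2]
    have : ((k+(m+1)+1).factorial : ℝ) ≠ 0 := by positivity
    field_simp

lemma aux_int (w : ℝ) (hw : w > 1 / 4) :
    (∫ x in (0:ℝ)..1, 1 / (w - x * (1 - x))) =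
      4 * Real.arctan (1 / Real.sqrt (4 * w - 1)) / Real.sqrt (4 * w - 1) := by
  set s := Real.sqrt (4 * w - 1) with hs_def
  have h4w : (0:ℝ) < 4 * w - 1 := by linarith
  have hs : 0 < s := Real.sqrt_pos.mpr h4w
  have hs2 : s ^ 2 = 4 * w - 1 := Real.sq_sqrt h4w.le
  have hders : ∀ x ∈ Set.uIcc (0:ℝ) 1,
      HasDerivAt (fun x : ℝ => 2 / s * Real.arctan ((2 * x - 1) / s))
        (1 / (w - x * (1 - x))) x := by
    intro x _
    have hinner : HasDerivAt (fun x : ℝ => (2 * x - 1) / s) (2 / s) x := by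
      have : HasDerivAt (fun x : ℝ => 2 * x - 1) 2 x := by
        simpa using ((hasDerivAt_id x).const_mul (2:ℝ)).sub_const 1
      simpa using this.div_const s
    have harc := (Real.hasDerivAt_arctan ((2 * x - 1) / s)).comp x hinner
    have := harc.const_mul (2 / s)
    refine this.congr_deriv ?_
    have hden : w - x * (1 - x) = (s ^ 2 + (2 * x - 1) ^ 2) / 4 := by
      rw [hs2]; ring
    rw [hden]
    simp only [Function.comp_def, div_pow]
    have h1 : s ^ 2 + (2 * x - 1) ^ 2 > 0 := by positivity
    field_simp
    ring
  have hcont : IntervalIntegrable (fun x : ℝ => 1 / (w - x * (1 - x))) MeasureTheory.volume 0 1 := by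
    apply Continuous.intervalIntegrable
    apply Continuous.div continuous_const (by fun_prop)
    intro x
    nlinarith [sq_nonneg (2 * x - 1)]
  rw [integral_eq_sub_of_hasDerivAt hders hcont]
  have h0 : (2 * (0:ℝ) - 1) / s = -(1 / s) := by ring
  have h1 : (2 * (1:ℝ) - 1) / s = 1 / s := by ring
  rw [h0, h1, Real.arctan_neg]
  field_simp
  ring

theorem stmt8 (w : ℝ) (hw : w > 1 / 4) :
    Summable (fun n : ℕ =>
      |1 / (w ^ (n + 1) * (Nat.choose (2 * n) n : ℝ) * (2 * (n : ℝ) + 1))|) ∧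
    (∑' n : ℕ, 1 / (w ^ (n + 1) * (Nat.choose (2 * n) n : ℝ) * (2 * (n : ℝ) + 1)) =
      ∫ x in (0:ℝ)..1, 1 / (w - x * (1 - x))) ∧
    (∫ x in (0:ℝ)..1, 1 / (w - x * (1 - x))) =
      4 * Real.arctan (1 / Real.sqrt (4 * w - 1)) / Real.sqrt (4 * w - 1) := by
  have hw0 : (0:ℝ) < w := by linarith
  have hC : ∀ n : ℕ, (0:ℝ) < (Nat.choose (2*n) n : ℝ) := fun n =>
    Nat.cast_pos.mpr (Nat.choose_pos (by omega))
  have hterm_pos : ∀ n : ℕ,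
      (0:ℝ) < w ^ (n + 1) * (Nat.choose (2 * n) n : ℝ) * (2 * (n : ℝ) + 1) := by
    intro n
    have := hC n
    positivity
  -- lower bound for the denominator
  have hCge : ∀ n : ℕ, (4:ℝ)^n ≤ (Nat.choose (2*n) n : ℝ) * (2*(n:ℝ)+1) := by
    intro n
    have hn : 4^n ≤ Nat.centralBinom n * (2*n+1) := by
      rcases Nat.eq_zero_or_pos n with h|h
      · subst h; simp [Nat.centralBinom]
      · calc 4^n ≤ 2*n*Nat.centralBinom n :=
              Nat.four_pow_le_two_mul_self_mul_centralBinom n h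
          _ ≤ Nat.centralBinom n * (2*n+1) := by
              rw [mul_comm]; exact Nat.mul_le_mul_left _ (by omega)
    calc (4:ℝ)^n = ((4^n : ℕ) : ℝ) := by push_cast; ring
      _ ≤ ((Nat.centralBinom n * (2*n+1) : ℕ) : ℝ) := Nat.cast_le.mpr hn
      _ = (Nat.choose (2*n) n : ℝ) * (2*(n:ℝ)+1) := by
          rw [Nat.centralBinom]; push_cast; ring
  -- Part 1: summability
  have hsum : Summable (fun n : ℕ =>
      |1 / (w ^ (n + 1) * (Nat.choose (2 * n) n : ℝ) * (2 * (n : ℝ) + 1))|) := by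
    have hr1 : (0:ℝ) ≤ 1/(4*w) := by positivity
    have hr2 : 1/(4*w) < 1 := by rw [div_lt_one (by linarith)]; linarith
    apply Summable.of_nonneg_of_le (fun n => abs_nonneg _) _
      ((summable_geometric_of_lt_one hr1 hr2).mul_left (1/w))
    intro n
    rw [abs_of_nonneg (one_div_pos.mpr (hterm_pos n)).le]
    have hle : w ^ (n+1) * 4^n ≤ w ^ (n + 1) * (Nat.choose (2 * n) n : ℝ) * (2 * (n : ℝ) + 1) := by
      rw [mul_assoc]
      exact mul_le_mul_of_nonneg_left (hCge n) (by positivity)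
    have := one_div_le_one_div_of_le (by positivity) hle
    refine this.trans_eq ?_
    rw [pow_succ]
    have h4 : ((4:ℝ)*w)^n = 4^n * w^n := by rw [mul_pow]
    rw [div_pow, one_pow, h4]
    field_simp
  refine ⟨hsum, ?_, aux_int w hw⟩
  -- Part 2
  have hF_int : ∀ n : ℕ, MeasureTheory.IntegrableOn
      (fun x : ℝ => (x * (1-x))^n / w^(n+1)) (Set.Ioc (0:ℝ) 1) := by
    intro n
    apply Continuous.integrableOn_Ioc
    fun_prop
  have hval : ∀ n : ℕ, ∫ x in Set.Ioc (0:ℝ) 1, (x * (1-x))^n / w^(n+1)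
      = 1 / (w ^ (n + 1) * (Nat.choose (2 * n) n : ℝ) * (2 * (n : ℝ) + 1)) := by
    intro n
    rw [← intervalIntegral.integral_of_le zero_le_one]
    simp_rw [mul_pow, div_eq_mul_inv, intervalIntegral.integral_mul_const, aux_beta n n]
    -- now: n! * n! / (n+n+1)! * (w^(n+1))⁻¹ = 1 / (w^(n+1) * C * (2n+1))
    have hfac : ((n+n+1).factorial : ℝ)
        = (Nat.choose (2*n) n : ℝ) * n.factorial * n.factorial * (2*(n:ℝ)+1) := by
      have h1 : n + n + 1 = 2*n + 1 := by omega
      rw [h1, Nat.factorial_succ]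
      have h2 : (2*n).factorial = Nat.choose (2*n) n * n.factorial * (2*n - n).factorial :=
        (Nat.choose_mul_factorial_mul_factorial (show n ≤ 2*n by omega)).symm
      have h3 : 2*n - n = n := by omega
      rw [h2, h3]
      push_cast
      ring
    rw [hfac]
    have hCn := hC n
    have hfn : (0:ℝ) < (n.factorial : ℝ) := by positivity
    have hwp : (0:ℝ) < w^(n+1) := by positivity
    field_simp
  have hnorm : ∀ n : ℕ, ∫ x in Set.Ioc (0:ℝ) 1, ‖(x * (1-x))^n / w^(n+1)‖
      = 1 / (w ^ (n + 1) * (Nat.choose (2 * n) n : ℝ) * (2 * (n : ℝ) + 1)) := by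
    intro n
    rw [← hval n]
    apply MeasureTheory.setIntegral_congr_fun measurableSet_Ioc
    intro x hx
    have hx0 : 0 ≤ x := hx.1.le
    have hx1 : x ≤ 1 := hx.2
    have : 0 ≤ (x * (1-x))^n / w^(n+1) := by
      apply div_nonneg _ (by positivity)
      apply pow_nonneg
      nlinarith
    simp [Real.norm_of_nonneg this]
  have hsum2 : Summable (fun n : ℕ => ∫ x in Set.Ioc (0:ℝ) 1, ‖(x * (1-x))^n / w^(n+1)‖) := by
    simp_rw [hnorm]
    exact hsum.congr (fun n => abs_of_nonneg (one_div_pos.mpr (hterm_pos n)).le)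
  have hswap := MeasureTheory.integral_tsum_of_summable_integral_norm hF_int hsum2
  calc ∑' n : ℕ, 1 / (w ^ (n + 1) * (Nat.choose (2 * n) n : ℝ) * (2 * (n : ℝ) + 1))
      = ∑' n : ℕ, ∫ x in Set.Ioc (0:ℝ) 1, (x * (1-x))^n / w^(n+1) := by
        exact tsum_congr fun n => (hval n).symm
    _ = ∫ x in Set.Ioc (0:ℝ) 1, ∑' n : ℕ, (x * (1-x))^n / w^(n+1) := hswap
    _ = ∫ x in Set.Ioc (0:ℝ) 1, 1 / (w - x * (1 - x)) := by
        apply MeasureTheory.setIntegral_congr_fun measurableSet_Ioc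
        intro x hx
        have hx0 : 0 ≤ x := hx.1.le
        have hx1 : x ≤ 1 := hx.2
        have hxx : 0 ≤ x * (1-x) := by nlinarith
        have hxx4 : x * (1-x) ≤ 1/4 := by nlinarith [sq_nonneg (2*x - 1)]
        have hr0 : 0 ≤ x * (1-x) / w := by positivity
        have hr1 : x * (1-x) / w < 1 := by
          rw [div_lt_one hw0]; linarith
        have heq : ∀ n : ℕ, (x * (1-x))^n / w^(n+1) = (x * (1-x) / w)^n * (1/w) := by
          intro n
          rw [div_pow, pow_succ]
          field_simp
        simp only [heq]
        rw [tsum_mul_right, tsum_geometric_of_lt_one hr0 hr1]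
        have hden : 0 < w - x * (1-x) := by linarith
        have h1r : 0 < 1 - x * (1-x) / w := by linarith
        field_simp
    _ = ∫ x in (0:ℝ)..1, 1 / (w - x * (1 - x)) :=
        (intervalIntegral.integral_of_le zero_le_one).symm
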